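/- Let p be a prime and let K be a complete nonarchimedean (ultrametric) normed field of characteristic 0 with ‖p‖ = p^{-1}. Let f(x) = x·Σ_{k≥0} (a_k/k!) x^k ∈ K[[x]] with ‖a_0‖ = 1 and ‖a_k‖ ≤ 1 for all k. Then the series f converges at every point of the disk D = {x ∈ K : ‖x‖ < p^{-1/(p-1)}}, and its evaluation defines a bijective isometry f : D → D; in particular ‖f(x) − f(y)‖ = ‖x − y‖ for all x, y ∈ D. -/

import Mathlib

open IsUltrametricDist

lemma aux_r_pos {p : ℕ} (hp : p.Prime) : (0:ℝ) < (p : ℝ) ^ (-1 / ((p : ℝ) - 1)) :=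
  Real.rpow_pos_of_pos (by exact_mod_cast hp.pos) _

section Aux
variable {K : Type*} [NormedField K] [CompleteSpace K] [IsUltrametricDist K] [CharZero K]
  {p : ℕ}

omit [CompleteSpace K] [CharZero K] in
lemma aux_norm_of_not_dvd (hp : p.Prime) (hpnorm : ‖(p : K)‖ = (p : ℝ)⁻¹)
    {u : ℕ} (hu : ¬ p ∣ u) : ‖(u : K)‖ = 1 := by
  refine le_antisymm (norm_natCast_le_one K u) ?_
  have hcop : IsCoprime (p : ℤ) (u : ℤ) := by
    rw [Int.isCoprime_iff_gcd_eq_one]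
    exact_mod_cast (Nat.Prime.coprime_iff_not_dvd hp).mpr hu
  obtain ⟨s, t, hst⟩ := hcop
  have hcast : (s : K) * (p : K) + (t : K) * (u : K) = 1 := by
    have := congrArg (fun z : ℤ => (z : K)) hst
    push_cast at this
    simpa using this
  have h1 : (1 : ℝ) ≤ max (‖(s : K) * (p : K)‖) (‖(t : K) * (u : K)‖) := by
    calc (1:ℝ) = ‖(1 : K)‖ := by simp
    _ = ‖(s : K) * (p : K) + (t : K) * (u : K)‖ := by rw [hcast]
    _ ≤ _ := norm_add_le_max _ _
  have hp1 : (1 : ℝ) < (p : ℝ) := by exact_mod_cast hp.one_lt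
  have hsp : ‖(s : K) * (p : K)‖ < 1 := by
    rw [norm_mul, hpnorm]
    calc ‖(s:K)‖ * (p:ℝ)⁻¹ ≤ 1 * (p:ℝ)⁻¹ := by
          gcongr
          exact norm_intCast_le_one K s
    _ < 1 := by rw [one_mul]; exact inv_lt_one_of_one_lt₀ hp1
  rcases max_cases (‖(s : K) * (p : K)‖) (‖(t : K) * (u : K)‖) with ⟨h, _⟩ | ⟨h, _⟩
  · exact absurd (h1.trans_lt (h ▸ hsp)) (by simp)
  · rw [h] at h1
    calc (1:ℝ) ≤ ‖(t : K) * (u : K)‖ := h1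
    _ = ‖(t:K)‖ * ‖(u:K)‖ := norm_mul _ _
    _ ≤ 1 * ‖(u:K)‖ := by gcongr; exact norm_intCast_le_one K t
    _ = ‖(u:K)‖ := one_mul _

omit [CompleteSpace K] in
lemma aux_norm_fact (hp : p.Prime) (hpnorm : ‖(p : K)‖ = (p : ℝ)⁻¹) (k : ℕ) :
    ((p : ℝ) ^ (-1 / ((p : ℝ) - 1))) ^ k ≤ ‖((k.factorial : ℕ) : K)‖ := by
  haveI : Fact p.Prime := ⟨hp⟩
  have hp1 : (1 : ℝ) < (p : ℝ) := by exact_mod_cast hp.one_lt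
  have hp0 : (0 : ℝ) < (p : ℝ) := by positivity
  set v := padicValNat p k.factorial with hv
  have hfacpos : 0 < k.factorial := k.factorial_pos
  have hkey : k.factorial = p ^ v * (k.factorial / p ^ (k.factorial.factorization p)) := by
    rw [hv, ← Nat.factorization_def _ hp]
    exact (Nat.ordProj_mul_ordCompl_eq_self k.factorial p).symm
  have hndvd : ¬ p ∣ (k.factorial / p ^ (k.factorial.factorization p)) :=
    Nat.not_dvd_ordCompl hp hfacpos.ne'
  have hnorm : ‖((k.factorial : ℕ) : K)‖ = ((p : ℝ)⁻¹) ^ v := by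
    conv_lhs => rw [hkey]
    push_cast
    rw [norm_mul, norm_pow, hpnorm, aux_norm_of_not_dvd hp hpnorm hndvd, mul_one]
  rw [hnorm]
  have hleg : (p - 1) * v ≤ k := by
    rw [hv, sub_one_mul_padicValNat_factorial (p := p) k]
    exact Nat.sub_le _ _
  have hlegR : ((p : ℝ) - 1) * (v : ℝ) ≤ (k : ℝ) := by
    have h2 : (2 : ℕ) ≤ p := hp.two_le
    have : (((p - 1) * v : ℕ) : ℝ) ≤ (k : ℝ) := by exact_mod_cast hleg
    push_cast [Nat.cast_sub (by omega : 1 ≤ p)] at this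
    linarith
  have hrw1 : ((p : ℝ) ^ (-1 / ((p : ℝ) - 1))) ^ k = (p : ℝ) ^ ((-1 / ((p : ℝ) - 1)) * k) := by
    rw [Real.rpow_mul hp0.le, Real.rpow_natCast]
  have hrw2 : ((p : ℝ)⁻¹) ^ v = (p : ℝ) ^ (-(v : ℝ)) := by
    rw [← Real.rpow_neg_one, ← Real.rpow_natCast ((p:ℝ) ^ (-1:ℝ)) v, ← Real.rpow_mul hp0.le]
    ring_nf
  rw [hrw1, hrw2, Real.rpow_le_rpow_left_iff hp1]
  rw [div_mul_eq_mul_div, div_le_iff₀ (by linarith)]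
  nlinarith [hlegR]

omit [CompleteSpace K] in
lemma aux_term_bound (hp : p.Prime) (hpnorm : ‖(p : K)‖ = (p : ℝ)⁻¹)
    (a : ℕ → K) (ha : ∀ k, ‖a k‖ ≤ 1) (k : ℕ) (x y : K) :
    ‖a k / (k.factorial : K) * (x ^ (k+1) - y ^ (k+1))‖ ≤
      ‖x - y‖ * (((p : ℝ) ^ (-1 / ((p : ℝ) - 1)))⁻¹ * max ‖x‖ ‖y‖) ^ k := by
  set r : ℝ := (p : ℝ) ^ (-1 / ((p : ℝ) - 1)) with hr
  have hr0 : 0 < r := aux_r_pos hp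
  set M : ℝ := max ‖x‖ ‖y‖ with hM
  have hM0 : 0 ≤ M := le_max_of_le_left (norm_nonneg x)
  have hcoeff : ‖a k / (k.factorial : K)‖ ≤ (r⁻¹) ^ k := by
    rw [norm_div]
    calc ‖a k‖ / ‖((k.factorial : ℕ) : K)‖ ≤ 1 / r ^ k :=
      div_le_div₀ zero_le_one (ha k) (pow_pos hr0 k) (aux_norm_fact hp hpnorm k)
    _ = (r⁻¹) ^ k := by rw [one_div, inv_pow]
  have hdiff : ‖x ^ (k+1) - y ^ (k+1)‖ ≤ M ^ k * ‖x - y‖ := by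
    rw [← geom_sum₂_mul x y (k+1), norm_mul]
    refine mul_le_mul_of_nonneg_right ?_ (norm_nonneg _)
    refine norm_sum_le_of_forall_le_of_nonneg (pow_nonneg hM0 k) fun i hi => ?_
    rw [Finset.mem_range] at hi
    have hik : i ≤ k := Nat.lt_succ_iff.mp hi
    have hexp : k + 1 - 1 - i = k - i := by omega
    rw [hexp, norm_mul, norm_pow, norm_pow]
    calc ‖x‖ ^ i * ‖y‖ ^ (k - i) ≤ M ^ i * M ^ (k - i) := by
          gcongr
          · exact le_max_left _ _
          · exact le_max_right _ _
    _ = M ^ k := by rw [← pow_add]; congr 1; omega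
  calc ‖a k / (k.factorial : K) * (x ^ (k+1) - y ^ (k+1))‖
      = ‖a k / (k.factorial : K)‖ * ‖x ^ (k+1) - y ^ (k+1)‖ := norm_mul _ _
    _ ≤ (r⁻¹) ^ k * (M ^ k * ‖x - y‖) :=
        mul_le_mul hcoeff hdiff (norm_nonneg _) (pow_nonneg (by positivity) k)
    _ = ‖x - y‖ * (r⁻¹ * M) ^ k := by rw [mul_pow]; ring

omit [CompleteSpace K] in
lemma aux_term_bound' (hp : p.Prime) (hpnorm : ‖(p : K)‖ = (p : ℝ)⁻¹)
    (a : ℕ → K) (ha : ∀ k, ‖a k‖ ≤ 1) (k : ℕ) (x : K) :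
    ‖a k / (k.factorial : K) * x ^ (k+1)‖ ≤
      ‖x‖ * (((p : ℝ) ^ (-1 / ((p : ℝ) - 1)))⁻¹ * ‖x‖) ^ k := by
  have := aux_term_bound hp hpnorm a ha k x 0
  simpa [zero_pow, max_eq_left (norm_nonneg x)] using this

lemma aux_summable (hp : p.Prime) (hpnorm : ‖(p : K)‖ = (p : ℝ)⁻¹)
    (a : ℕ → K) (ha : ∀ k, ‖a k‖ ≤ 1) (x : K)
    (hx : ‖x‖ < (p : ℝ) ^ (-1 / ((p : ℝ) - 1))) :
    Summable (fun k => a k / (k.factorial : K) * x ^ (k+1)) := by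
  set r : ℝ := (p : ℝ) ^ (-1 / ((p : ℝ) - 1)) with hr
  have hr0 : 0 < r := aux_r_pos hp
  set t : ℝ := r⁻¹ * ‖x‖ with ht
  have ht0 : 0 ≤ t := by positivity
  have ht1 : t < 1 := by
    rw [ht]
    calc r⁻¹ * ‖x‖ < r⁻¹ * r := by gcongr
    _ = 1 := inv_mul_cancel₀ hr0.ne'
  refine Summable.of_norm_bounded (g := fun k => ‖x‖ * t ^ k)
    ((summable_geometric_of_lt_one ht0 ht1).mul_left _) fun k => ?_
  exact aux_term_bound' hp hpnorm a ha k x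

lemma aux_isometry (hp : p.Prime) (hpnorm : ‖(p : K)‖ = (p : ℝ)⁻¹)
    (a : ℕ → K) (ha0 : ‖a 0‖ = 1) (ha : ∀ k, ‖a k‖ ≤ 1) (x y : K)
    (hx : ‖x‖ < (p : ℝ) ^ (-1 / ((p : ℝ) - 1)))
    (hy : ‖y‖ < (p : ℝ) ^ (-1 / ((p : ℝ) - 1))) :
    ‖(∑' k, a k / (k.factorial : K) * x ^ (k+1)) -
      (∑' k, a k / (k.factorial : K) * y ^ (k+1))‖ = ‖x - y‖ := by
  by_cases hxy : x = y
  · simp [hxy]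
  set r : ℝ := (p : ℝ) ^ (-1 / ((p : ℝ) - 1)) with hr
  have hr0 : 0 < r := aux_r_pos hp
  set M : ℝ := max ‖x‖ ‖y‖ with hM
  have hMr : M < r := max_lt hx hy
  set c : ℝ := r⁻¹ * M with hc
  have hM0 : 0 ≤ M := le_max_of_le_left (norm_nonneg x)
  have hc0 : 0 ≤ c := by positivity
  have hc1 : c < 1 := by
    rw [hc]
    calc r⁻¹ * M < r⁻¹ * r := by gcongr
    _ = 1 := inv_mul_cancel₀ hr0.ne'
  have hsx := aux_summable hp hpnorm a ha x hx
  have hsy := aux_summable hp hpnorm a ha y hy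
  have hsd : Summable (fun k => a k / (k.factorial : K) * (x ^ (k+1) - y ^ (k+1))) := by
    simpa [mul_sub] using hsx.sub hsy
  have hdiff : (∑' k, a k / (k.factorial : K) * x ^ (k+1)) -
      (∑' k, a k / (k.factorial : K) * y ^ (k+1)) =
      ∑' k, a k / (k.factorial : K) * (x ^ (k+1) - y ^ (k+1)) := by
    rw [← Summable.tsum_sub hsx hsy]
    exact tsum_congr fun k => (mul_sub _ _ _).symm
  rw [hdiff, Summable.tsum_eq_zero_add hsd]
  have h0 : a 0 / ((Nat.factorial 0 : ℕ) : K) * (x ^ (0+1) - y ^ (0+1)) = a 0 * (x - y) := by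
    simp [Nat.factorial]
  have hA : ‖a 0 * (x - y)‖ = ‖x - y‖ := by rw [norm_mul, ha0, one_mul]
  have hxy0 : 0 < ‖x - y‖ := norm_pos_iff.mpr (sub_ne_zero.mpr hxy)
  have hT : ‖∑' k, a (k+1) / (((k+1).factorial : ℕ) : K) * (x ^ (k+1+1) - y ^ (k+1+1))‖
      ≤ ‖x - y‖ * c := by
    refine norm_tsum_le_of_forall_le_of_nonneg (by positivity) fun k => ?_
    calc ‖a (k+1) / (((k+1).factorial : ℕ) : K) * (x ^ (k+1+1) - y ^ (k+1+1))‖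
        ≤ ‖x - y‖ * c ^ (k+1) := aux_term_bound hp hpnorm a ha (k+1) x y
      _ ≤ ‖x - y‖ * c := by
          gcongr
          exact pow_le_of_le_one hc0 hc1.le k.succ_ne_zero
  have hlt : ‖∑' k, a (k+1) / (((k+1).factorial : ℕ) : K) * (x ^ (k+1+1) - y ^ (k+1+1))‖
      < ‖a 0 * (x - y)‖ := by
    rw [hA]
    exact hT.trans_lt (mul_lt_of_lt_one_right hxy0 hc1)
  rw [h0, norm_add_eq_max_of_norm_ne_norm hlt.ne', max_eq_left hlt.le, hA]

end Aux
section Aux2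
variable {K : Type*} [NormedField K] [CompleteSpace K] [IsUltrametricDist K] [CharZero K]
  {p : ℕ}

lemma aux_norm_sum (hp : p.Prime) (hpnorm : ‖(p : K)‖ = (p : ℝ)⁻¹)
    (a : ℕ → K) (ha0 : ‖a 0‖ = 1) (ha : ∀ k, ‖a k‖ ≤ 1) (x : K)
    (hx : ‖x‖ < (p : ℝ) ^ (-1 / ((p : ℝ) - 1))) :
    ‖∑' k, a k / (k.factorial : K) * x ^ (k+1)‖ = ‖x‖ := by
  have h0 : ‖(0 : K)‖ < (p : ℝ) ^ (-1 / ((p : ℝ) - 1)) := by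
    simpa using aux_r_pos hp
  have := aux_isometry hp hpnorm a ha0 ha x 0 hx h0
  simpa [zero_pow] using this

lemma aux_surj (hp : p.Prime) (hpnorm : ‖(p : K)‖ = (p : ℝ)⁻¹)
    (a : ℕ → K) (ha0 : ‖a 0‖ = 1) (ha : ∀ k, ‖a k‖ ≤ 1) (y : K)
    (hy : ‖y‖ < (p : ℝ) ^ (-1 / ((p : ℝ) - 1))) :
    ∃ x : K, ‖x‖ ≤ ‖y‖ ∧ (∑' k, a k / (k.factorial : K) * x ^ (k+1)) = y := by
  set r : ℝ := (p : ℝ) ^ (-1 / ((p : ℝ) - 1)) with hr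
  have hr0 : 0 < r := aux_r_pos hp
  by_cases hy0 : y = 0
  · refine ⟨0, by simp [hy0], ?_⟩
    simp [hy0, zero_pow]
  set c : ℝ := r⁻¹ * ‖y‖ with hc
  have hc0 : 0 ≤ c := by positivity
  have hc1 : c < 1 := by
    rw [hc]
    calc r⁻¹ * ‖y‖ < r⁻¹ * r := by gcongr
    _ = 1 := inv_mul_cancel₀ hr0.ne'
  have ha0' : a 0 ≠ 0 := by
    intro h; rw [h, norm_zero] at ha0; exact zero_ne_one ha0
  have ha0inv : ‖(a 0)⁻¹‖ = 1 := by rw [norm_inv, ha0, inv_one]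
  set g : K → K := fun z => ∑' k, a (k+1) / (((k+1).factorial : ℕ) : K) * z ^ (k+1+1) with hg
  set T : K → K := fun z => (a 0)⁻¹ * (y - g z) with hTdef
  set s : Set K := Metric.closedBall (0:K) ‖y‖ with hs
  have hmem : ∀ z ∈ s, ‖z‖ ≤ ‖y‖ := fun z hz => by
    simpa [hs, mem_closedBall_zero_iff] using hz
  have hzr : ∀ z ∈ s, ‖z‖ < r := fun z hz => (hmem z hz).trans_lt hy
  -- difference bound for g
  have hgdiff : ∀ z w : K, max ‖z‖ ‖w‖ ≤ ‖y‖ → ‖g z - g w‖ ≤ c * ‖z - w‖ := by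
    intro z w hmax
    have hzr' : ‖z‖ < r := (le_max_left _ _).trans_lt (hmax.trans_lt hy)
    have hwr' : ‖w‖ < r := (le_max_right _ _).trans_lt (hmax.trans_lt hy)
    have hsz : Summable (fun k => a (k+1) / (((k+1).factorial : ℕ) : K) * z ^ (k+1+1)) := by
      have := (summable_nat_add_iff
          (f := fun k => a k / ((k.factorial : ℕ) : K) * z ^ (k+1)) 1).mpr
        (aux_summable hp hpnorm a ha z hzr')
      simpa using this
    have hsw : Summable (fun k => a (k+1) / (((k+1).factorial : ℕ) : K) * w ^ (k+1+1)) := by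
      have := (summable_nat_add_iff
          (f := fun k => a k / ((k.factorial : ℕ) : K) * w ^ (k+1)) 1).mpr
        (aux_summable hp hpnorm a ha w hwr')
      simpa using this
    have heq : g z - g w = ∑' k, a (k+1) / (((k+1).factorial : ℕ) : K)
        * (z ^ (k+1+1) - w ^ (k+1+1)) := by
      rw [hg]
      simp only
      rw [← Summable.tsum_sub hsz hsw]
      exact tsum_congr fun k => (mul_sub _ _ _).symm
    rw [heq]
    refine norm_tsum_le_of_forall_le_of_nonneg (by positivity) fun k => ?_
    calc ‖a (k+1) / (((k+1).factorial : ℕ) : K) * (z ^ (k+1+1) - w ^ (k+1+1))‖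
        ≤ ‖z - w‖ * (r⁻¹ * max ‖z‖ ‖w‖) ^ (k+1) := aux_term_bound hp hpnorm a ha (k+1) z w
      _ ≤ ‖z - w‖ * c ^ (k+1) := by
          refine mul_le_mul_of_nonneg_left (pow_le_pow_left₀ (by positivity) ?_ _) (norm_nonneg _)
          rw [hc]
          exact mul_le_mul_of_nonneg_left hmax (by positivity)
      _ ≤ ‖z - w‖ * c := by
          gcongr
          exact pow_le_of_le_one hc0 hc1.le k.succ_ne_zero
      _ = c * ‖z - w‖ := mul_comm _ _
  have hg0 : g 0 = 0 := by
    rw [hg]; simp [zero_pow]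
  have hgz : ∀ z ∈ s, ‖g z‖ ≤ c * ‖z‖ := by
    intro z hz
    have := hgdiff z 0 (by simpa using hmem z hz)
    simpa [hg0] using this
  have hmaps : Set.MapsTo T s s := by
    intro z hz
    rw [hs, mem_closedBall_zero_iff]
    show ‖(a 0)⁻¹ * (y - g z)‖ ≤ ‖y‖
    rw [norm_mul, ha0inv, one_mul]
    have hsub : ‖y - g z‖ ≤ max ‖y‖ ‖g z‖ := by
      rw [sub_eq_add_neg]
      refine (norm_add_le_max _ _).trans ?_
      rw [norm_neg]
    refine hsub.trans (max_le le_rfl ?_)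
    calc ‖g z‖ ≤ c * ‖z‖ := hgz z hz
    _ ≤ 1 * ‖y‖ := mul_le_mul hc1.le (hmem z hz) (norm_nonneg _) zero_le_one
    _ = ‖y‖ := one_mul _
  -- contraction
  set c' : NNReal := ⟨c, hc0⟩ with hc'
  have hcontr : ContractingWith c' (hmaps.restrict T s s) := by
    constructor
    · exact_mod_cast hc1
    refine LipschitzWith.of_dist_le_mul fun z w => ?_
    rw [Subtype.dist_eq, hmaps.val_restrict_apply, hmaps.val_restrict_apply,
      Subtype.dist_eq, dist_eq_norm, dist_eq_norm]
    have hzw : T (z : K) - T (w : K) = (a 0)⁻¹ * (g (w : K) - g (z : K)) := by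
      rw [hTdef]; ring
    rw [hzw, norm_mul, ha0inv, one_mul]
    have := hgdiff (w : K) (z : K) (max_le (hmem _ w.2) (hmem _ z.2))
    calc ‖g (w : K) - g (z : K)‖ ≤ c * ‖(w : K) - (z : K)‖ := this
    _ = c' * ‖(z : K) - (w : K)‖ := by rw [norm_sub_rev]; rfl
  have hs0 : (0 : K) ∈ s := by simp [hs]
  haveI : Nonempty s := ⟨⟨0, hs0⟩⟩
  haveI : CompleteSpace s := (Metric.isClosed_closedBall (x := (0:K)) (ε := ‖y‖)).completeSpace_coe
  obtain ⟨x, hfix⟩ := hcontr.exists_fixedPoint ⟨0, hs0⟩ (edist_ne_top _ _)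
  obtain ⟨hfix, -, -⟩ := hfix
  have hfix' : T (x : K) = (x : K) := congrArg Subtype.val hfix
  have hxy : ‖(x : K)‖ ≤ ‖y‖ := hmem _ x.2
  have hxr : ‖(x : K)‖ < r := hxy.trans_lt hy
  -- from the fixed point equation, y = a 0 * x + g x
  have hyeq : y = a 0 * (x : K) + g (x : K) := by
    have h1 := congrArg (fun z => a 0 * z) hfix'
    simp only [hTdef] at h1
    rw [← mul_assoc, mul_inv_cancel₀ ha0', one_mul] at h1
    linear_combination h1
  refine ⟨(x : K), hxy, ?_⟩
  rw [Summable.tsum_eq_zero_add (aux_summable hp hpnorm a ha (x : K) hxr)]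
  have h0 : a 0 / ((Nat.factorial 0 : ℕ) : K) * (x : K) ^ (0+1) = a 0 * (x : K) := by
    simp [Nat.factorial]
  rw [h0]
  have htail : (∑' k, a (k+1) / (((k+1).factorial : ℕ) : K) * (x : K) ^ (k+1+1)) = g (x : K) :=
    rfl
  rw [htail]
  exact hyeq.symm

end Aux2

/-- If `f(x) = x ∑ (a_k/k!) x^k` with `‖a_0‖ = 1` and all
`‖a_k‖ ≤ 1` over a complete nonarchimedean normed field of characteristic `0`
with `‖p‖ = 1/p`, then `f` converges on the disk of radius `p^{-1/(p-1)}` and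
defines a bijective isometry of that disk to itself. -/
theorem isometry_of_integral_coeffs_factorial {K : Type*} [NormedField K]
    [CompleteSpace K] [IsUltrametricDist K] [CharZero K]
    (p : ℕ) (hp : p.Prime) (hpnorm : ‖(p : K)‖ = (p : ℝ)⁻¹)
    (a : ℕ → K) (ha0 : ‖a 0‖ = 1) (ha : ∀ k, ‖a k‖ ≤ 1) :
    ∃ F : {x : K // ‖x‖ < (p : ℝ) ^ (-1 / ((p : ℝ) - 1))} →
        {x : K // ‖x‖ < (p : ℝ) ^ (-1 / ((p : ℝ) - 1))},
      Function.Bijective F ∧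
      (∀ x : {x : K // ‖x‖ < (p : ℝ) ^ (-1 / ((p : ℝ) - 1))},
        HasSum (fun k => a k / (Nat.factorial k : K) * (x : K) ^ (k + 1)) (F x : K)) ∧
      ∀ x y : {x : K // ‖x‖ < (p : ℝ) ^ (-1 / ((p : ℝ) - 1))},
        ‖(F x : K) - (F y : K)‖ = ‖(x : K) - (y : K)‖ := by
  have hFmem : ∀ x : {x : K // ‖x‖ < (p : ℝ) ^ (-1 / ((p : ℝ) - 1))},
      ‖∑' k, a k / (Nat.factorial k : K) * (x : K) ^ (k+1)‖ < (p : ℝ) ^ (-1 / ((p : ℝ) - 1)) := by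
    intro x
    rw [aux_norm_sum hp hpnorm a ha0 ha (x : K) x.2]
    exact x.2
  set F : {x : K // ‖x‖ < (p : ℝ) ^ (-1 / ((p : ℝ) - 1))} →
      {x : K // ‖x‖ < (p : ℝ) ^ (-1 / ((p : ℝ) - 1))} :=
    fun x => ⟨∑' k, a k / (Nat.factorial k : K) * (x : K) ^ (k+1), hFmem x⟩ with hF
  have hval : ∀ x, (F x : K) = ∑' k, a k / (Nat.factorial k : K) * (x : K) ^ (k+1) :=
    fun x => rfl
  have hiso : ∀ x y, ‖(F x : K) - (F y : K)‖ = ‖(x : K) - (y : K)‖ := by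
    intro x y
    rw [hval, hval]
    exact aux_isometry hp hpnorm a ha0 ha (x : K) (y : K) x.2 y.2
  refine ⟨F, ⟨?_, ?_⟩, ?_, hiso⟩
  · intro x y h
    have := hiso x y
    rw [h, sub_self, norm_zero] at this
    exact Subtype.ext (sub_eq_zero.mp (norm_eq_zero.mp this.symm))
  · rintro ⟨y, hy⟩
    obtain ⟨x, hxle, hxeq⟩ := aux_surj hp hpnorm a ha0 ha y hy
    exact ⟨⟨x, hxle.trans_lt hy⟩, Subtype.ext hxeq⟩
  · intro x
    rw [hval]
    exact (aux_summable hp hpnorm a ha (x : K) x.2).hasSum
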